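/- In a free Lie ring L(V) on a free ℤ-module V with basis (x₁,...,x_n), n ≥ 2, the centralizer of a basis element x_i is ℤ·x_i. -/

import Mathlib

set_option linter.unusedSectionVars false

namespace CentralizerFreeLie


variable {α : Type*} [LinearOrder α]

/-! ### Lexicographic order lemmas on words -/

theorem le_of_prefix : ∀ {u v : List α}, u <+: v → u ≤ v := by
  intro u
  induction u with
  | nil =>
    intro v _
    cases v with
    | nil => exact le_refl _
    | cons a t => exact le_of_lt List.Lex.nil
  | cons a u ih =>
    intro v hp
    cases v with
    | nil => simp at hp
    | cons b t =>
      rw [List.cons_prefix_cons] at hp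
      obtain ⟨rfl, hp⟩ := hp
      rcases lt_or_eq_of_le (ih hp) with h | h
      · exact le_of_lt (List.Lex.cons h)
      · rw [h]

theorem lt_of_prefix_ne {u v : List α} (h : u <+: v) (hne : u ≠ v) : u < v :=
  lt_of_le_of_ne (le_of_prefix h) hne

/-- From `u < v` and `¬ u <+: v`, appending anything preserves strict order. -/
theorem append_lt_append_of_not_prefix :
    ∀ {u v : List α}, u < v → ¬ u <+: v → ∀ (x y : List α), u ++ x < v ++ y := by
  intro u v h
  induction h with
  | nil =>
    intro hnp _ _
    exact absurd (List.nil_prefix) hnp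
  | @cons a l₁ l₂ h ih =>
    intro hnp x y
    simp only [List.cons_append]
    refine List.Lex.cons (ih ?_ x y)
    intro hp
    exact hnp (by rw [List.cons_prefix_cons]; exact ⟨rfl, hp⟩)
  | @rel a₁ l₁ a₂ l₂ h =>
    intro _ x y
    exact List.Lex.rel h

theorem lt_append_right_of_lt {u v : List α} (h : u < v) (t : List α) : u < v ++ t := by
  by_cases hp : u <+: v
  · refine lt_of_prefix_ne (hp.trans (List.prefix_append v t)) ?_
    rintro rfl
    have h1 : v.length + t.length ≤ v.length := by
      simpa using hp.length_le
    have ht : t = [] := List.length_eq_zero_iff.mp (by omega)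
    rw [ht, List.append_nil] at h
    exact lt_irrefl _ h
  · have := append_lt_append_of_not_prefix h hp [] t
    simpa using this

/-- strip a common prefix: `p ++ u < p ++ v ↔ u < v`. -/
theorem append_lt_append_left_iff (p : List α) {u v : List α} :
    p ++ u < p ++ v ↔ u < v := by
  induction p with
  | nil => simp
  | cons a p ih =>
    simp only [List.cons_append]
    rw [show ((a :: (p ++ u)) < (a :: (p ++ v))) ↔ List.Lex (· < ·) (a :: (p ++ u)) (a :: (p ++ v)) from Iff.rfl,
      List.lex_cons_iff]
    exact ih

theorem append_le_append_left_iff (p : List α) {u v : List α} :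
    p ++ u ≤ p ++ v ↔ u ≤ v := by
  constructor
  · intro h
    by_contra hc
    rw [not_le] at hc
    exact absurd (lt_of_le_of_lt h ((append_lt_append_left_iff p).mpr hc)) (lt_irrefl _)
  · intro h
    rcases lt_or_eq_of_le h with h | h
    · exact le_of_lt ((append_lt_append_left_iff p).mpr h)
    · rw [h]

/-- same-length strict append monotonicity -/
theorem append_lt_append_of_length_eq {u v : List α} (h : u < v) (hl : u.length = v.length)
    (x y : List α) : u ++ x < v ++ y := by
  refine append_lt_append_of_not_prefix h ?_ x y
  intro hp
  have := hp.length_le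
  have : u = v := List.IsPrefix.eq_of_length hp hl
  subst this; exact lt_irrefl _ h

theorem append_le_append_of_length_eq {u v x y : List α} (h : u ≤ v) (hl : u.length = v.length)
    (hxy : x ≤ y) : u ++ x ≤ v ++ y := by
  rcases lt_or_eq_of_le h with h | h
  · exact le_of_lt (append_lt_append_of_length_eq h hl x y)
  · subst h
    exact (append_le_append_left_iff u).mpr hxy



variable {α : Type*} [LinearOrder α]




instance : Std.Antisymm (fun a b : List α => a ≤ b) := ⟨fun _ _ h1 h2 => le_antisymm h1 h2⟩

def minSuffix (w : List α) : List α :=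
  ((((w.drop 1).tails).filter (fun s => !s.isEmpty)).min?).getD []

theorem minSuffix_spec {w : List α} (hw : 2 ≤ w.length) :
    (minSuffix w ≠ [] ∧ minSuffix w <:+ w.drop 1) ∧
      ∀ s : List α, s ≠ [] → s <:+ w.drop 1 → minSuffix w ≤ s := by
  set Lc := (((w.drop 1).tails).filter (fun s => !s.isEmpty)) with hLc
  have hmem : ∀ s : List α, s ∈ Lc ↔ (s <:+ w.drop 1 ∧ s ≠ []) := by
    intro s
    rw [hLc, List.mem_filter, List.mem_tails]
    simp [List.isEmpty_iff]
  have hne : w.drop 1 ∈ Lc := by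
    rw [hmem]
    refine ⟨List.suffix_refl _, ?_⟩
    intro h
    have := congrArg List.length h
    simp at this
    omega
  have : Lc ≠ [] := by intro h; rw [h] at hne; simp at hne
  obtain ⟨m, hm⟩ : ∃ m, Lc.min? = some m := by
    cases h : Lc.min? with
    | none => exact absurd (List.min?_eq_none_iff.mp h) this
    | some m => exact ⟨m, rfl⟩
  have hspec := (List.min?_eq_some_iff).mp hm
  have hmin : minSuffix w = m := by rw [minSuffix, hLc] at *; rw [hm]; rfl
  rw [hmin]
  obtain ⟨hm1, hm2⟩ := hspec
  rw [hmem] at hm1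
  exact ⟨⟨hm1.2, hm1.1⟩, fun s hs1 hs2 => hm2 s ((hmem s).mpr ⟨hs2, hs1⟩)⟩

theorem minSuffix_ne_nil {w : List α} (hw : 2 ≤ w.length) : minSuffix w ≠ [] :=
  (minSuffix_spec hw).1.1

theorem minSuffix_suffix_drop {w : List α} (hw : 2 ≤ w.length) : minSuffix w <:+ w.drop 1 :=
  (minSuffix_spec hw).1.2

theorem minSuffix_min {w : List α} (hw : 2 ≤ w.length) {s : List α} (hs : s ≠ [])
    (hsfx : s <:+ w.drop 1) : minSuffix w ≤ s :=
  (minSuffix_spec hw).2 s hs hsfx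

/-- proper suffix iff suffix of the tail -/
theorem suffix_drop_one_iff {w s : List α} (hw : w ≠ []) :
    s <:+ w.drop 1 ↔ (s <:+ w ∧ s ≠ w) := by
  cases w with
  | nil => simp at hw
  | cons a t =>
    simp only [List.drop_one, List.tail_cons]
    constructor
    · intro h
      refine ⟨h.trans (List.suffix_cons a t), ?_⟩
      rintro rfl
      have := h.length_le
      simp at this
    · rintro ⟨h1, h2⟩
      rcases List.suffix_cons_iff.mp h1 with h | h
      · exact absurd h h2
      · exact h

theorem minSuffix_length_lt {w : List α} (hw : 2 ≤ w.length) :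
    (minSuffix w).length < w.length := by
  have := (minSuffix_suffix_drop hw).length_le
  simp at this
  omega

def preW (w : List α) : List α := w.take (w.length - (minSuffix w).length)

theorem preW_append_minSuffix {w : List α} (hw : 2 ≤ w.length) :
    preW w ++ minSuffix w = w := by
  obtain ⟨p, hp⟩ := (minSuffix_suffix_drop hw).trans (List.drop_suffix 1 w)
  have hl : p.length + (minSuffix w).length = w.length := by
    have := congrArg List.length hp
    simpa using this
  have : preW w = p := by
    rw [preW]
    set m := minSuffix w with hm
    rw [← hp, List.length_append,
      show p.length + m.length - m.length = p.length by omega]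
    exact List.take_left
  rw [this, hp]

theorem preW_ne_nil {w : List α} (hw : 2 ≤ w.length) : preW w ≠ [] := by
  intro h
  have := preW_append_minSuffix hw
  rw [h, List.nil_append] at this
  have := congrArg List.length this
  have hlt := minSuffix_length_lt hw
  omega

theorem preW_length_lt {w : List α} (hw : 2 ≤ w.length) : (preW w).length < w.length := by
  have h := congrArg List.length (preW_append_minSuffix hw)
  simp only [List.length_append] at h
  have h1 : (minSuffix w).length ≠ 0 := by
    intro h0
    exact minSuffix_ne_nil hw (List.length_eq_zero_iff.mp h0)
  omega

/-- suffix of an append decomposes -/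
theorem suffix_append_cases {s u v : List α} (h : s <:+ u ++ v) :
    s <:+ v ∨ ∃ s', s' <:+ u ∧ s' ≠ [] ∧ s = s' ++ v := by
  obtain ⟨p, hp⟩ := h
  rcases le_or_gt s.length v.length with hl | hl
  · left
    have hpu : u <+: p := by
      refine List.prefix_of_prefix_length_le (List.prefix_append u v) ⟨s, hp⟩ ?_
      have := congrArg List.length hp
      simp at this
      omega
    obtain ⟨p', rfl⟩ := hpu
    rw [List.append_assoc] at hp
    have := (List.append_cancel_left hp)
    exact ⟨p', this⟩
  · right
    have hvs : v <:+ s := by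
      refine List.suffix_of_suffix_length_le (List.suffix_append u v) ⟨p, hp⟩ ?_
      omega
    obtain ⟨s', rfl⟩ := hvs
    refine ⟨s', ?_, ?_, rfl⟩
    · rw [← List.append_assoc] at hp
      have hlen : (p ++ s').length = u.length := by
        have := congrArg List.length hp
        simp at this ⊢
        omega
      obtain ⟨h1, _⟩ := List.append_inj hp hlen
      exact ⟨p, h1⟩
    · intro h0
      rw [h0] at hl
      simp at hl


end CentralizerFreeLie

namespace CentralizerFreeLie

variable {α : Type*} [LinearOrder α]

/-! ### Lyndon words -/

def IsLyndon (w : List α) : Prop :=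
  w ≠ [] ∧ ∀ s, s ≠ [] → s <:+ w → s ≠ w → w < s

theorem isLyndon_singleton (a : α) : IsLyndon [a] := by
  refine ⟨by simp, ?_⟩
  intro s hs hsfx hne
  exfalso
  rcases List.suffix_cons_iff.mp hsfx with h | h
  · exact hne h
  · simp at h; exact hs h

/-- key: for `u ≠ []`, `v` Lyndon, `u < v` we get `u ++ v < v`. -/
theorem append_lt_right {u v : List α} (hu : u ≠ []) (hv : IsLyndon v) (huv : u < v) :
    u ++ v < v := by
  by_cases hp : u <+: v
  · obtain ⟨z, hz⟩ := hp
    have hzne : z ≠ [] := by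
      rintro rfl
      rw [List.append_nil] at hz
      subst hz; exact lt_irrefl _ huv
    have hzv : v < z := by
      refine hv.2 z hzne ⟨u, hz⟩ ?_
      rintro rfl
      have := congrArg List.length hz
      simp only [List.length_append] at this
      exact hu (List.length_eq_zero_iff.mp (by omega))
    calc u ++ v < u ++ z := (append_lt_append_left_iff u).mpr hzv
    _ = v := hz
  · have := append_lt_append_of_not_prefix huv hp v []
    simpa using this

theorem IsLyndon.lt_minSuffix {w : List α} (hw : IsLyndon w) (h2 : 2 ≤ w.length) :
    w < minSuffix w := by
  have hsfx := (suffix_drop_one_iff hw.1).mp (minSuffix_suffix_drop h2)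
  exact hw.2 _ (minSuffix_ne_nil h2) hsfx.1 hsfx.2

theorem IsLyndon.minSuffix_isLyndon {w : List α} (_hw : IsLyndon w) (h2 : 2 ≤ w.length) :
    IsLyndon (minSuffix w) := by
  refine ⟨minSuffix_ne_nil h2, ?_⟩
  intro s hs hsfx hne
  have : s <:+ w.drop 1 := hsfx.trans (minSuffix_suffix_drop h2)
  exact lt_of_le_of_ne (minSuffix_min h2 hs this) (Ne.symm hne)

theorem IsLyndon.preW_isLyndon {w : List α} (hw : IsLyndon w) (h2 : 2 ≤ w.length) :
    IsLyndon (preW w) := by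
  set u := preW w with hu
  set m := minSuffix w with hm
  have hsplit : u ++ m = w := preW_append_minSuffix h2
  refine ⟨preW_ne_nil h2, ?_⟩
  intro s hs hsfx hne
  by_contra hc
  have hslt : s < u := lt_of_le_of_ne (le_of_not_gt hc) hne
  -- s ++ m is a nonempty proper suffix of w
  have hsm_sfx : s ++ m <:+ w := by
    obtain ⟨p, hp⟩ := hsfx
    exact ⟨p, by rw [← hsplit, ← hp, List.append_assoc]⟩
  have hslen : s.length < u.length := by
    have h1 := hsfx.length_le
    rcases lt_or_eq_of_le h1 with h | h
    · exact h
    · exact absurd (List.IsSuffix.eq_of_length hsfx h) hne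
  have hsm_ne : s ++ m ≠ w := by
    intro h
    have := congrArg List.length h
    rw [← hsplit] at this
    simp at this
    omega
  have hw_lt : w < s ++ m := hw.2 _ (by simp [hs]) hsm_sfx hsm_ne
  by_cases hp : s <+: u
  · -- u = s ++ m₂ with m₂ nonempty suffix of u
    obtain ⟨m₂, hm₂⟩ := hp
    have hm₂ne : m₂ ≠ [] := by
      rintro rfl
      rw [List.append_nil] at hm₂
      exact hne (hm₂)
    -- w = s ++ (m₂ ++ m) < s ++ m, so m₂ ++ m < m
    have hlt : m₂ ++ m < m := by
      have : s ++ (m₂ ++ m) < s ++ m := by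
        rw [← List.append_assoc, hm₂, hsplit]
        exact hw_lt
      exact (append_lt_append_left_iff s).mp this
    -- but m ≤ m₂ ++ m by minimality
    have hsfx2 : m₂ ++ m <:+ w.drop 1 := by
      rw [suffix_drop_one_iff hw.1]
      constructor
      · obtain ⟨p, hp2⟩ : m₂ <:+ u := ⟨s, hm₂⟩
        exact ⟨p, by rw [← hsplit, ← hp2, List.append_assoc]⟩
      · intro h
        have h5 := congrArg List.length h
        rw [← hsplit] at h5
        simp only [List.length_append] at h5
        have h6 := congrArg List.length hm₂
        simp only [List.length_append] at h6
        have h7 : (0:ℕ) < m₂.length := List.length_pos_iff.mpr hm₂ne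
        have h8 : (0:ℕ) < s.length ∨ s = [] := by
          rcases Nat.eq_zero_or_pos s.length with h | h
          · exact Or.inr (List.length_eq_zero_iff.mp h)
          · exact Or.inl h
        rcases h8 with h8 | rfl
        · omega
        · exact hs rfl
    have := minSuffix_min h2 (by simp [hm₂ne]) hsfx2
    rw [← hm] at this
    exact absurd hlt (not_lt.mpr this)
  · have := append_lt_append_of_not_prefix hslt hp m m
    rw [hsplit] at this
    exact absurd hw_lt (not_lt.mpr (le_of_lt this))

theorem isLyndon_append {u v : List α} (hu : IsLyndon u) (hv : IsLyndon v) (huv : u < v) :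
    IsLyndon (u ++ v) := by
  refine ⟨by simp [hu.1], ?_⟩
  intro s hs hsfx hne
  have hw_lt_v : u ++ v < v := append_lt_right hu.1 hv huv
  rcases suffix_append_cases hsfx with h | ⟨s', hs'u, hs'ne, rfl⟩
  · rcases eq_or_ne s v with rfl | hne2
    · exact hw_lt_v
    · exact lt_trans hw_lt_v (hv.2 s hs h hne2)
  · have hs'nu : s' ≠ u := by
      rintro rfl
      exact hne rfl
    have hlt : u < s' := hu.2 s' hs'ne hs'u hs'nu
    have hp : ¬ u <+: s' := by
      intro hp
      have h1 := hp.length_le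
      have h2 := hs'u.length_le
      have : u = s' := List.IsPrefix.eq_of_length hp (by omega)
      exact hs'nu this.symm
    exact append_lt_append_of_not_prefix hlt hp v v

/-- p < q with q Lyndon and p nonempty implies pq < qp -/
theorem append_comm_lt {p q : List α} (hp : p ≠ []) (hq : IsLyndon q) (hpq : p < q) :
    p ++ q < q ++ p := by
  by_cases hpfx : p <+: q
  · obtain ⟨t, ht⟩ := hpfx
    have htne : t ≠ [] := by
      rintro rfl
      rw [List.append_nil] at ht
      subst ht; exact lt_irrefl _ hpq
    have hqt : q < t := by
      refine hq.2 t htne ⟨p, ht⟩ ?_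
      rintro rfl
      have := congrArg List.length ht
      simp only [List.length_append] at this
      exact hp (List.length_eq_zero_iff.mp (by omega))
    calc p ++ q < p ++ (t ++ p) := by
          rw [append_lt_append_left_iff]
          exact lt_append_right_of_lt hqt p
    _ = q ++ p := by rw [← List.append_assoc, ht]
  · exact append_lt_append_of_not_prefix hpq hpfx q p

/-- standardness: if every nonempty proper suffix of `u` is `≥ v`, then
    `minSuffix (u ++ v) = v`. -/
theorem minSuffix_append_eq {u v : List α} (hu : u ≠ []) (hv : IsLyndon v)
    (hcond : ∀ s, s ≠ [] → s <:+ u → s ≠ u → v ≤ s) :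
    minSuffix (u ++ v) = v := by
  have h2 : 2 ≤ (u ++ v).length := by
    rcases List.exists_cons_of_ne_nil hu with ⟨a, u', rfl⟩
    rcases List.exists_cons_of_ne_nil hv.1 with ⟨b, v', rfl⟩
    simp
    omega
  have hvne : v ≠ u ++ v := by
    intro h
    have := congrArg List.length h
    simp only [List.length_append] at this
    have h0 : u.length = 0 := by omega
    exact hu (List.length_eq_zero_iff.mp h0)
  have hv_sfx : v <:+ (u ++ v).drop 1 := by
    rw [suffix_drop_one_iff (by simp [hu])]
    exact ⟨List.suffix_append u v, hvne⟩
  have h1 : minSuffix (u ++ v) ≤ v := minSuffix_min h2 hv.1 hv_sfx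
  have h2' : v ≤ minSuffix (u ++ v) := by
    have hm := (suffix_drop_one_iff (by simp [hu] : (u++v) ≠ [])).mp (minSuffix_suffix_drop h2)
    rcases suffix_append_cases hm.1 with h | ⟨s', hs'u, hs'ne, heq⟩
    · rcases eq_or_ne (minSuffix (u ++ v)) v with he | hne2
      · rw [he]
      · exact le_of_lt (hv.2 _ (minSuffix_ne_nil h2) h hne2)
    · have hs'nu : s' ≠ u := by
        rintro rfl
        exact hm.2 heq
      have hvs' : v ≤ s' := hcond s' hs'ne hs'u hs'nu
      rw [heq]
      rcases lt_or_eq_of_le hvs' with h | h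
      · exact le_of_lt (lt_append_right_of_lt h v)
      · subst h
        exact le_of_prefix (List.prefix_append v v)
  exact le_antisymm h1 h2'

theorem preW_append_eq {u v : List α} (hmin : minSuffix (u ++ v) = v) :
    preW (u ++ v) = u := by
  rw [preW, hmin]
  rw [List.length_append, show u.length + v.length - v.length = u.length by omega]
  exact List.take_left

end CentralizerFreeLie
namespace CentralizerFreeLie


/-! ### encoding of words into ℕ, order-preserving for bounded length -/

def enc (n : ℕ) : ℕ → List (Fin n) → ℕ
  | _, [] => 0
  | N, a :: w => ((a : ℕ) + 1) * (n + 1) ^ (N - 1) + enc n (N - 1) w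

theorem enc_lt_pow (n : ℕ) : ∀ (N : ℕ) (w : List (Fin n)), w.length ≤ N →
    enc n N w < (n + 1) ^ N := by
  intro N
  induction N with
  | zero =>
    intro w hw
    rcases List.length_eq_zero_iff.mp (Nat.le_zero.mp hw) with rfl
    simp [enc]
  | succ N ih =>
    intro w hw
    cases w with
    | nil =>
      simp only [enc]
      positivity
    | cons a w =>
      simp only [enc, Nat.add_sub_cancel]
      have h1 : enc n N w < (n + 1) ^ N := ih w (by simp at hw; omega)
      have h2 : (a : ℕ) + 1 ≤ n := by
        have := a.isLt
        omega
      calc ((a : ℕ) + 1) * (n + 1) ^ N + enc n N w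
          < ((a : ℕ) + 1) * (n + 1) ^ N + (n + 1) ^ N := by omega
        _ = ((a : ℕ) + 2) * (n + 1) ^ N := by ring
        _ ≤ (n + 1) * (n + 1) ^ N := by
            have : (a : ℕ) + 2 ≤ n + 1 := by omega
            exact Nat.mul_le_mul_right _ this
        _ = (n + 1) ^ (N + 1) := by ring

theorem enc_strictMono' (n : ℕ) : ∀ {u v : List (Fin n)}, List.Lex (· < ·) u v →
    ∀ N : ℕ, u.length ≤ N → v.length ≤ N → enc n N u < enc n N v := by
  intro u v h'
  induction h' with
  | @nil b l =>
    intro N _ hv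
    have hN : 1 ≤ N := by simp at hv; omega
    have : 0 < ((b : ℕ) + 1) * (n + 1) ^ (N - 1) := by positivity
    simp only [enc]
    omega
  | @cons a l₁ l₂ h ih =>
    intro N hu hv
    simp only [enc]
    have hN : 1 ≤ N := by simp at hv; omega
    have := ih (N - 1) (by simp at hu; omega) (by simp at hv; omega)
    omega
  | @rel a₁ l₁ a₂ l₂ h =>
    intro N hu hv
    simp only [enc]
    have hN : 1 ≤ N := by simp at hv; omega
    have h1 : enc n (N - 1) l₁ < (n + 1) ^ (N - 1) :=
      enc_lt_pow n (N - 1) l₁ (by simp at hu; omega)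
    have h2 : ((a₁ : ℕ) + 1) < ((a₂ : ℕ) + 1) := by
      have : (a₁ : ℕ) < (a₂ : ℕ) := Fin.lt_def.mp h
      omega
    have h3 : ((a₁ : ℕ) + 1) * (n + 1) ^ (N - 1) + (n + 1) ^ (N - 1)
        ≤ ((a₂ : ℕ) + 1) * (n + 1) ^ (N - 1) := by
      have : ((a₁ : ℕ) + 1 + 1) * (n + 1) ^ (N - 1) ≤ ((a₂ : ℕ) + 1) * (n + 1) ^ (N - 1) :=
        Nat.mul_le_mul_right _ (by omega)
      calc ((a₁ : ℕ) + 1) * (n + 1) ^ (N - 1) + (n + 1) ^ (N - 1)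
          = ((a₁ : ℕ) + 1 + 1) * (n + 1) ^ (N - 1) := by ring
        _ ≤ _ := this
    have h4 : (0:ℕ) ≤ enc n (N - 1) l₂ := Nat.zero_le _
    omega

theorem enc_strictMono (n : ℕ) {u v : List (Fin n)} (h : u < v) (N : ℕ)
    (hu : u.length ≤ N) (hv : v.length ≤ N) : enc n N u < enc n N v :=
  enc_strictMono' n h N hu hv


end CentralizerFreeLie
namespace CentralizerFreeLie

open FreeLieAlgebra

variable {n : ℕ}

attribute [local instance] LieRing.ofAssociativeRing

/-! ### the Lyndon bracketing in the free Lie ring -/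

noncomputable def bw : List (Fin n) → FreeLieAlgebra ℤ (Fin n)
  | w =>
    if h : 2 ≤ w.length then
      ⁅bw (preW w), bw (minSuffix w)⁆
    else
      match w with
      | [a] => of ℤ a
      | _ => 0
  termination_by w => w.length
  decreasing_by
  · exact preW_length_lt h
  · exact minSuffix_length_lt h

theorem finsupp_sum_eq_zero {ι M N : Type*} [Zero M] [AddCommMonoid N] (f : ι →₀ M)
    (F : ι → M → N) (h : ∀ a ∈ f.support, F a (f a) = 0) : f.sum F = 0 :=
  Finset.sum_eq_zero h

theorem bw_singleton (a : Fin n) : bw [a] = of ℤ a := by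
  rw [bw]
  norm_num

theorem bw_split {w : List (Fin n)} (h : 2 ≤ w.length) :
    bw w = ⁅bw (preW w), bw (minSuffix w)⁆ := by
  rw [bw]
  simp [h]

/-! ### the morphism to the monoid algebra of the free monoid -/

noncomputable def Φ : FreeLieAlgebra ℤ (Fin n) →ₗ⁅ℤ⁆ MonoidAlgebra ℤ (FreeMonoid (Fin n)) :=
  FreeLieAlgebra.lift ℤ (fun j => MonoidAlgebra.single (FreeMonoid.of j) 1)

theorem Φ_of (j : Fin n) : Φ (of ℤ j) = MonoidAlgebra.single (FreeMonoid.of j) 1 := by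
  exact FreeLieAlgebra.lift_of_apply (R := ℤ) _ j

def ofl (w : List (Fin n)) : FreeMonoid (Fin n) := FreeMonoid.ofList w

theorem ofl_append (u v : List (Fin n)) : ofl (u ++ v) = ofl u * ofl v :=
  FreeMonoid.ofList_append u v

theorem toList_ofl (w : List (Fin n)) : FreeMonoid.toList (ofl w) = w :=
  FreeMonoid.toList_ofList w

theorem ofl_injective : Function.Injective (ofl (n := n)) := by
  intro a b h
  have := congrArg FreeMonoid.toList h
  rwa [toList_ofl, toList_ofl] at this

theorem ofl_singleton (a : Fin n) : ofl [a] = FreeMonoid.of a := rfl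

/-- multiplication coefficient extraction when the left support has fixed length -/
theorem mul_apply_split (f g : MonoidAlgebra ℤ (FreeMonoid (Fin n))) (u v : List (Fin n))
    (hf : ∀ m ∈ f.coeff.support, (FreeMonoid.toList m).length = u.length) :
    (f * g).coeff (ofl (u ++ v)) = f.coeff (ofl u) * g.coeff (ofl v) := by
  classical
  rw [MonoidAlgebra.coeff_mul]
  rw [Finsupp.sum_eq_single (ofl u)]
  · rw [Finsupp.sum_eq_single (ofl v)]
    · rw [if_pos (ofl_append u v).symm]
    · intro b hb hne
      rw [if_neg]
      intro hcon
      apply hne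
      rw [ofl_append] at hcon
      exact mul_left_cancel hcon
    · intro _
      simp
  · intro b hb hne
    apply finsupp_sum_eq_zero
    intro c hc
    rw [if_neg]
    intro hcon
    apply hne
    have h1 : FreeMonoid.toList b ++ FreeMonoid.toList c = u ++ v := by
      have := congrArg FreeMonoid.toList hcon
      rwa [FreeMonoid.toList_mul, toList_ofl] at this
    have h2 := (List.append_inj h1 (hf b (Finsupp.mem_support_iff.mpr hb))).1
    rw [← FreeMonoid.ofList_toList b, h2]
    rfl
  · intro _
    apply finsupp_sum_eq_zero
    intro c hc
    simp

end CentralizerFreeLie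
namespace CentralizerFreeLie

open FreeLieAlgebra

variable {n : ℕ}

attribute [local instance] LieRing.ofAssociativeRing

theorem tri : ∀ (N : ℕ) (l : List (Fin n)), l.length = N → IsLyndon l →
    ((Φ (bw l)).coeff (ofl l) = 1 ∧
      ∀ m ∈ (Φ (bw l)).coeff.support,
        (FreeMonoid.toList m).length = l.length ∧ l ≤ FreeMonoid.toList m) := by
  intro N
  induction N using Nat.strong_induction_on with
  | _ N ihN =>
  intro l hlen hly
  by_cases h2 : 2 ≤ l.length
  · set u := preW l with hu
    set v := minSuffix l with hv
    have hsplit : u ++ v = l := preW_append_minSuffix h2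
    have hlu : IsLyndon u := hly.preW_isLyndon h2
    have hlv : IsLyndon v := hly.minSuffix_isLyndon h2
    have hulen : u.length < l.length := preW_length_lt h2
    have hvlen : v.length < l.length := minSuffix_length_lt h2
    have hltv : l < v := hly.lt_minSuffix h2
    obtain ⟨hu1, hu2⟩ := ihN u.length (hlen ▸ hulen) u rfl hlu
    obtain ⟨hv1, hv2⟩ := ihN v.length (hlen ▸ hvlen) v rfl hlv
    have hbw : bw l = ⁅bw u, bw v⁆ := bw_split h2
    have hΦ : Φ (bw l) = Φ (bw u) * Φ (bw v) - Φ (bw v) * Φ (bw u) := by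
      rw [hbw, LieHom.map_lie, Ring.lie_def]
    set f := Φ (bw u) with hf
    set g := Φ (bw v) with hg
    have hfl : ∀ m ∈ f.coeff.support, (FreeMonoid.toList m).length = u.length :=
      fun m hm => (hu2 m hm).1
    have hgl : ∀ m ∈ g.coeff.support, (FreeMonoid.toList m).length = v.length :=
      fun m hm => (hv2 m hm).1
    have hlenuv : u.length + v.length = l.length := by
      have := congrArg List.length hsplit
      simpa using this
    constructor
    · rw [hΦ, MonoidAlgebra.coeff_sub, Finsupp.sub_apply]
      have e1 : (f * g).coeff (ofl l) = 1 := by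
        rw [← hsplit, mul_apply_split f g u v hfl, hu1, hv1, one_mul]
      have e2 : (g * f).coeff (ofl l) = 0 := by
        have hsplit2 : (l.take v.length) ++ (l.drop v.length) = l := List.take_append_drop _ _
        have hside : ∀ m ∈ g.coeff.support, (FreeMonoid.toList m).length = (l.take v.length).length := by
          intro m hm
          rw [hgl m hm, List.length_take]
          exact (min_eq_left (le_of_lt hvlen)).symm
        calc (g * f).coeff (ofl l) = (g * f).coeff (ofl ((l.take v.length) ++ (l.drop v.length))) := by
              rw [hsplit2]
          _ = g.coeff (ofl (l.take v.length)) * f.coeff (ofl (l.drop v.length)) :=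
              mul_apply_split g f _ _ hside
          _ = 0 := by
              have hz : g.coeff (ofl (l.take v.length)) = 0 := by
                by_contra hne
                have hmem : ofl (l.take v.length) ∈ g.coeff.support := Finsupp.mem_support_iff.mpr hne
                have hle := (hv2 _ hmem).2
                rw [toList_ofl] at hle
                have htake : l.take v.length ≤ l := le_of_prefix (List.take_prefix _ _)
                exact absurd (lt_of_le_of_lt (le_trans hle htake) hltv) (lt_irrefl _)
              rw [hz, zero_mul]
      rw [e1, e2]
      norm_num
    · intro m hm
      classical
      rw [hΦ, MonoidAlgebra.coeff_sub] at hm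
      have hm' := Finsupp.support_sub hm
      rcases Finset.mem_union.mp hm' with hcase | hcase
      · have := MonoidAlgebra.support_coeff_mul_subset f g hcase
        rw [Finset.mem_mul] at this
        obtain ⟨y, hy, z, hz, rfl⟩ := this
        have hty := hu2 y hy
        have htz := hv2 z hz
        rw [FreeMonoid.toList_mul]
        constructor
        · rw [List.length_append, hty.1, htz.1, hlenuv]
        · rw [← hsplit]
          exact append_le_append_of_length_eq hty.2 hty.1.symm htz.2
      · have := MonoidAlgebra.support_coeff_mul_subset g f hcase
        rw [Finset.mem_mul] at this
        obtain ⟨y, hy, z, hz, rfl⟩ := this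
        have hty := hv2 y hy
        have htz := hu2 z hz
        rw [FreeMonoid.toList_mul]
        constructor
        · rw [List.length_append, hty.1, htz.1]
          omega
        · refine le_of_lt ?_
          rcases lt_or_eq_of_le hty.2 with hlt | heq
          · exact lt_append_right_of_lt (lt_trans hltv hlt) _
          · rw [← heq]
            exact lt_append_right_of_lt hltv _
  · have h1 : l.length = 1 := by
      have : l ≠ [] := hly.1
      have := List.length_pos_iff.mpr this
      omega
    obtain ⟨a, rfl⟩ := List.length_eq_one_iff.mp h1
    rw [bw_singleton, Φ_of]
    constructor
    · rw [ofl_singleton]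
      simp [MonoidAlgebra.coeff_single]
    · intro m hm
      classical
      rw [MonoidAlgebra.coeff_single, Finsupp.support_single_ne_zero _ one_ne_zero] at hm
      rcases Finset.mem_singleton.mp hm with rfl
      constructor
      · simp
      · simp

end CentralizerFreeLie
namespace CentralizerFreeLie

open FreeLieAlgebra

variable {n : ℕ}

attribute [local instance] LieRing.ofAssociativeRing

theorem lie_mem_span (c : FreeLieAlgebra ℤ (Fin n)) (s : Set (FreeLieAlgebra ℤ (Fin n)))
    (T : Submodule ℤ (FreeLieAlgebra ℤ (Fin n)))
    (h : ∀ y ∈ s, ⁅c, y⁆ ∈ T) : ∀ y ∈ Submodule.span ℤ s, ⁅c, y⁆ ∈ T := by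
  intro y hy
  induction hy using Submodule.span_induction with
  | mem x hx => exact h x hx
  | zero => rw [lie_zero]; exact T.zero_mem
  | add x y hx hy ihx ihy => rw [lie_add]; exact T.add_mem ihx ihy
  | smul a x hx ihx => rw [lie_smul]; exact T.smul_mem a ihx

theorem spanning : ∀ (N k : ℕ) (u v : List (Fin n)), IsLyndon u → IsLyndon v → u < v →
    u.length + v.length = N → enc n N v = k →
    ⁅bw u, bw v⁆ ∈ Submodule.span ℤ
      (bw '' {l : List (Fin n) | IsLyndon l ∧ l.length = N ∧ u ++ v ≤ l ∧ l < v}) := by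
  intro N
  induction N using Nat.strong_induction_on with
  | _ N ihN =>
  intro k
  induction k using Nat.strong_induction_on with
  | _ k ihk =>
  intro u v hu hv huv hN hk
  have hulen0 : 0 < u.length := List.length_pos_iff.mpr hu.1
  have hvlen0 : 0 < v.length := List.length_pos_iff.mpr hv.1
  by_cases hstd : u.length = 1 ∨ v ≤ minSuffix u
  · -- standard case : bw (u ++ v) = ⁅bw u, bw v⁆
    have hcond : ∀ s, s ≠ [] → s <:+ u → s ≠ u → v ≤ s := by
      intro s hs hsfx hne
      have hslen : s.length < u.length :=
        lt_of_le_of_ne hsfx.length_le (fun hh => hne (List.IsSuffix.eq_of_length hsfx hh))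
      have hslen0 : 0 < s.length := List.length_pos_iff.mpr hs
      rcases hstd with h1 | h1
      · omega
      · refine le_trans h1 (minSuffix_min (by omega) hs ?_)
        rw [suffix_drop_one_iff hu.1]
        exact ⟨hsfx, hne⟩
    have hmin : minSuffix (u ++ v) = v := minSuffix_append_eq hu.1 hv hcond
    have hpre : preW (u ++ v) = u := preW_append_eq hmin
    have h2 : 2 ≤ (u ++ v).length := by
      rw [List.length_append]; omega
    have hbw : bw (u ++ v) = ⁅bw u, bw v⁆ := by rw [bw_split h2, hpre, hmin]
    refine Submodule.subset_span ?_
    refine ⟨u ++ v, ⟨isLyndon_append hu hv huv, ?_, le_refl _,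
      append_lt_right hu.1 hv huv⟩, hbw⟩
    rw [List.length_append]; omega
  · push_neg at hstd
    obtain ⟨hne1, hqv'⟩ := hstd
    have h2u : 2 ≤ u.length := by omega
    set p := preW u with hp
    set q := minSuffix u with hq
    have hqv : q < v := hqv'
    have hsplitu : p ++ q = u := preW_append_minSuffix h2u
    have hpL : IsLyndon p := hu.preW_isLyndon h2u
    have hqL : IsLyndon q := hu.minSuffix_isLyndon h2u
    have hplen : p.length < u.length := preW_length_lt h2u
    have hqlen : q.length < u.length := minSuffix_length_lt h2u
    have hplen0 : 0 < p.length := List.length_pos_iff.mpr (preW_ne_nil h2u)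
    have hqlen0 : 0 < q.length := List.length_pos_iff.mpr (minSuffix_ne_nil h2u)
    have hpq_len : p.length + q.length = u.length := by
      have := congrArg List.length hsplitu
      simpa using this
    have huq : u < q := hu.lt_minSuffix h2u
    have hpu : p < u := by
      refine lt_of_prefix_ne (hsplitu ▸ List.prefix_append p q) ?_
      intro hh
      have := congrArg List.length hh
      omega
    have hpltq : p < q := lt_trans hpu huq
    have hpv : p < v := lt_trans hpu huv
    have hjac : ⁅bw u, bw v⁆ = ⁅bw p, ⁅bw q, bw v⁆⁆ - ⁅bw q, ⁅bw p, bw v⁆⁆ := by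
      rw [bw_split h2u, ← hp, ← hq]
      exact lie_lie _ _ _
    rw [hjac]
    refine sub_mem ?_ ?_
    · -- first term
      have hrec1 := ihN (q.length + v.length) (by omega)
        (enc n (q.length + v.length) v) q v hqL hv hqv rfl rfl
      refine lie_mem_span (bw p) _ _ ?_ _ hrec1
      rintro y ⟨m, ⟨hmL, hmlen, hmge, hmlt⟩, rfl⟩
      have hplm : p < m := lt_of_lt_of_le (lt_append_right_of_lt hpltq v) hmge
      have hrec2 := ihk (enc n N m)
        (by rw [← hk]; exact enc_strictMono n hmlt N (by omega) (by omega))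
        p m hpL hmL hplm (by omega) rfl
      refine Submodule.span_mono (Set.image_mono ?_) hrec2
      rintro l ⟨h1, h2, h3, h4⟩
      refine ⟨h1, h2, ?_, lt_trans h4 hmlt⟩
      calc u ++ v = p ++ (q ++ v) := by rw [← hsplitu, List.append_assoc]
        _ ≤ p ++ m := (append_le_append_left_iff p).mpr hmge
        _ ≤ l := h3
    · -- second term
      have hrec1 := ihN (p.length + v.length) (by omega)
        (enc n (p.length + v.length) v) p v hpL hv hpv rfl rfl
      refine lie_mem_span (bw q) _ _ ?_ _ hrec1
      rintro y ⟨m, ⟨hmL, hmlen, hmge, hmlt⟩, rfl⟩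
      rcases lt_trichotomy q m with hqm | hqm | hqm
      · -- q < m
        have hrec2 := ihk (enc n N m)
          (by rw [← hk]; exact enc_strictMono n hmlt N (by omega) (by omega))
          q m hqL hmL hqm (by omega) rfl
        refine Submodule.span_mono (Set.image_mono ?_) hrec2
        rintro l ⟨h1, h2, h3, h4⟩
        refine ⟨h1, h2, ?_, lt_trans h4 hmlt⟩
        have e1 : (p ++ q) ++ v < (q ++ p) ++ v :=
          append_lt_append_of_length_eq (append_comm_lt hpL.1 hqL hpltq)
            (by rw [List.length_append, List.length_append]; omega) v v
        rw [List.append_assoc q p v] at e1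
        refine le_trans (le_of_lt ?_) h3
        calc u ++ v = (p ++ q) ++ v := by rw [hsplitu]
          _ < q ++ (p ++ v) := e1
          _ ≤ q ++ m := (append_le_append_left_iff q).mpr hmge
      · -- q = m
        rw [← hqm, lie_self]
        exact Submodule.zero_mem _
      · -- m < q
        rw [← lie_skew]
        refine neg_mem ?_
        have hrec2 := ihk (enc n N q)
          (by rw [← hk]; exact enc_strictMono n hqv N (by omega) (by omega))
          m q hmL hqL hqm (by omega) rfl
        refine Submodule.span_mono (Set.image_mono ?_) hrec2
        rintro l ⟨h1, h2, h3, h4⟩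
        refine ⟨h1, h2, ?_, lt_trans h4 hqv⟩
        have e1 : q ++ v < v ++ q := append_comm_lt hqL.1 hv hqv
        have e2 : (p ++ v) ++ q ≤ m ++ q :=
          append_le_append_of_length_eq hmge
            (by rw [List.length_append]; omega) (le_refl q)
        refine le_trans (le_of_lt ?_) (le_trans e2 h3)
        calc u ++ v = p ++ (q ++ v) := by rw [← hsplitu, List.append_assoc]
          _ < p ++ (v ++ q) := (append_lt_append_left_iff p).mpr e1
          _ = (p ++ v) ++ q := by rw [List.append_assoc]

end CentralizerFreeLie
namespace CentralizerFreeLie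

open FreeLieAlgebra

variable {n : ℕ}

attribute [local instance] LieRing.ofAssociativeRing

theorem bracket_bw_mem {l₁ l₂ : List (Fin n)} (h₁ : IsLyndon l₁) (h₂ : IsLyndon l₂) :
    ⁅bw l₁, bw l₂⁆ ∈ Submodule.span ℤ (bw '' {l : List (Fin n) | IsLyndon l}) := by
  rcases lt_trichotomy l₁ l₂ with h | h | h
  · exact Submodule.span_mono (Set.image_mono (fun l hl => hl.1))
      (spanning _ _ l₁ l₂ h₁ h₂ h rfl rfl)
  · rw [h, lie_self]
    exact zero_mem _
  · rw [← lie_skew]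
    exact neg_mem (Submodule.span_mono (Set.image_mono (fun l hl => hl.1))
      (spanning _ _ l₂ l₁ h₂ h₁ h rfl rfl))

theorem S_lie_closed : ∀ x ∈ Submodule.span ℤ (bw '' {l : List (Fin n) | IsLyndon l}),
    ∀ y ∈ Submodule.span ℤ (bw '' {l : List (Fin n) | IsLyndon l}),
    ⁅x, y⁆ ∈ Submodule.span ℤ (bw '' {l : List (Fin n) | IsLyndon l}) := by
  intro x hx
  induction hx using Submodule.span_induction with
  | mem a ha =>
    intro y hy
    obtain ⟨l₁, hl₁, rfl⟩ := ha
    refine lie_mem_span (bw l₁) _ _ ?_ y hy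
    rintro z ⟨l₂, hl₂, rfl⟩
    exact bracket_bw_mem hl₁ hl₂
  | zero =>
    intro y hy
    rw [zero_lie]
    exact zero_mem _
  | add a b _ _ iha ihb =>
    intro y hy
    rw [add_lie]
    exact add_mem (iha y hy) (ihb y hy)
  | smul c a _ iha =>
    intro y hy
    rw [smul_lie]
    exact Submodule.smul_mem _ c (iha y hy)

noncomputable def KS (n : ℕ) : LieSubalgebra ℤ (FreeLieAlgebra ℤ (Fin n)) :=
  { Submodule.span ℤ (bw '' {l : List (Fin n) | IsLyndon l}) with
    lie_mem' := fun {x y} hx hy => S_lie_closed x hx y hy }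

theorem mem_KS (x : FreeLieAlgebra ℤ (Fin n)) (h : x ∈ KS n) :
    x ∈ Submodule.span ℤ (bw '' {l : List (Fin n) | IsLyndon l}) := h

theorem mem_S (u : FreeLieAlgebra ℤ (Fin n)) :
    u ∈ Submodule.span ℤ (bw '' {l : List (Fin n) | IsLyndon l}) := by
  let ε : FreeLieAlgebra ℤ (Fin n) →ₗ⁅ℤ⁆ KS n :=
    FreeLieAlgebra.lift ℤ (fun j =>
      ⟨bw [j], Submodule.subset_span ⟨[j], isLyndon_singleton j, rfl⟩⟩)
  have hcomp : (KS n).incl.comp ε = LieHom.id := by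
    apply (FreeLieAlgebra.lift ℤ).symm.injective
    erw [FreeLieAlgebra.lift_symm_apply, FreeLieAlgebra.lift_symm_apply]
    funext j
    show ((KS n).incl.comp ε) (of ℤ j) = LieHom.id (of ℤ j)
    rw [LieHom.comp_apply]
    have h1 : ε (of ℤ j) = ⟨bw [j], Submodule.subset_span ⟨[j], isLyndon_singleton j, rfl⟩⟩ := by
      exact FreeLieAlgebra.lift_of_apply (R := ℤ) _ j
    rw [h1]
    show bw [j] = of ℤ j
    exact bw_singleton j
  have h2 : ((KS n).incl.comp ε) u = u := by rw [hcomp]; rfl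
  rw [LieHom.comp_apply] at h2
  have h3 : (ε u : FreeLieAlgebra ℤ (Fin n)) = u := h2
  rw [← h3]
  exact (ε u).2

end CentralizerFreeLie
namespace CentralizerFreeLie

open FreeLieAlgebra

variable {n : ℕ}

attribute [local instance] LieRing.ofAssociativeRing

theorem ofl_cons (a : Fin n) (w : List (Fin n)) :
    ofl (a :: w) = FreeMonoid.of a * ofl w := by
  have h : ([a] ++ w) = a :: w := rfl
  rw [← h, ofl_append, ofl_singleton]

/-- value of `f * single x 1` when the equation `a * x = y` has no solution -/
theorem mul_single_apply_zero (f : MonoidAlgebra ℤ (FreeMonoid (Fin n)))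
    (x y : FreeMonoid (Fin n)) (H : ∀ a : FreeMonoid (Fin n), a * x ≠ y) :
    (f * MonoidAlgebra.single x (1:ℤ)).coeff y = 0 := by
  classical
  exact MonoidAlgebra.coeff_mul_single_of_forall_mul_ne 1 f H

theorem takeWhile_append_all {β : Type*} (p : β → Bool) (l₁ l₂ : List β)
    (h : ∀ a ∈ l₁, p a = true) :
    (l₁ ++ l₂).takeWhile p = l₁ ++ l₂.takeWhile p ∧
      (l₁ ++ l₂).dropWhile p = l₂.dropWhile p := by
  induction l₁ with
  | nil => simp
  | cons a l ih =>
    have ha : p a = true := h a List.mem_cons_self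
    have ih' := ih (fun b hb => h b (List.mem_cons_of_mem a hb))
    constructor
    · rw [List.cons_append, List.takeWhile_cons, if_pos ha, ih'.1, List.cons_append]
    · rw [List.cons_append, List.dropWhile_cons, if_pos ha, ih'.2]

/-- the support of an element commuting with `single (of i) 1` consists of powers of `i` -/
theorem centralizer_support (g : MonoidAlgebra ℤ (FreeMonoid (Fin n))) (i : Fin n)
    (hcomm : g * MonoidAlgebra.single (FreeMonoid.of i) 1
      = MonoidAlgebra.single (FreeMonoid.of i) 1 * g) :
    ∀ (k : ℕ) (w : List (Fin n)), (w.reverse.takeWhile (· == i)).length = k →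
      g.coeff (ofl w) ≠ 0 → w.reverse.dropWhile (· == i) = [] := by
  intro k
  induction k using Nat.strong_induction_on with
  | _ k ihk =>
  intro w hk hg
  by_contra hd
  obtain ⟨dh, d', hdh⟩ := List.exists_cons_of_ne_nil hd
  have hdhi : dh ≠ i := by
    have h1 := List.head_dropWhile_not (· == i) hd
    have h2 : (w.reverse.dropWhile (· == i)).head hd = dh := by
      simp only [hdh]
      rfl
    rw [h2] at h1
    intro hcon
    rw [hcon] at h1
    simp at h1
  have htd : w.reverse.takeWhile (· == i) ++ (dh :: d') = w.reverse := by
    rw [← hdh]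
    exact List.takeWhile_append_dropWhile
  -- the left side of the commutation relation at `i :: w`
  have hXg : (MonoidAlgebra.single (FreeMonoid.of i) (1:ℤ) * g).coeff (ofl (i :: w)) = g.coeff (ofl w) := by
    rw [MonoidAlgebra.coeff_single_mul_eq_mul_coeff]
    · rw [one_mul]
    · intro a _
      rw [ofl_cons]
      constructor
      · intro hh; exact mul_left_cancel hh
      · intro hh; rw [hh]
  have heq : (g * MonoidAlgebra.single (FreeMonoid.of i) (1:ℤ)).coeff (ofl (i :: w)) = g.coeff (ofl w) := by
    rw [hcomm, hXg]
  by_cases hkz : k = 0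
  · -- no solution case
    have htnil : w.reverse.takeWhile (· == i) = [] := by
      apply List.length_eq_zero_iff.mp
      omega
    have hrd : w.reverse = dh :: d' := by rw [← htd, htnil, List.nil_append]
    have hzero : (g * MonoidAlgebra.single (FreeMonoid.of i) (1:ℤ)).coeff (ofl (i :: w)) = 0 := by
      apply mul_single_apply_zero
      intro a hcon
      have h2 : FreeMonoid.toList a ++ [i] = i :: w := by
        have := congrArg FreeMonoid.toList hcon
        rwa [FreeMonoid.toList_mul, toList_ofl] at this
      have h3 : i :: (FreeMonoid.toList a).reverse = w.reverse ++ [i] := by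
        have h3' : List.reverse (FreeMonoid.toList a ++ [i]) = List.reverse (i :: w) := by rw [h2]
        simpa using h3'
      rw [hrd, List.cons_append] at h3
      exact hdhi ((List.cons.injEq _ _ _ _ ▸ h3).1).symm
    rw [heq] at hzero
    exact hg hzero
  · -- r begins with i
    have htne : w.reverse.takeWhile (· == i) ≠ [] := by
      intro h0
      rw [h0] at hk
      simp at hk
      omega
    obtain ⟨c, t', hct⟩ := List.exists_cons_of_ne_nil htne
    have hci : c = i := by
      have hmem : c ∈ w.reverse.takeWhile (· == i) := by
        rw [hct]; exact List.mem_cons_self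
      have := List.mem_takeWhile_imp hmem
      simpa using this
    rw [hci] at hct
    have ht'all : ∀ a ∈ t', (a == i) = true := by
      intro a ha
      have hmem : a ∈ w.reverse.takeWhile (· == i) := by
        rw [hct]; exact List.mem_cons_of_mem i ha
      exact List.mem_takeWhile_imp (p := fun x => x == i) hmem
    have hrs : w.reverse = i :: (t' ++ (dh :: d')) := by
      rw [← htd, hct, List.cons_append]
    have hwrev : w = (t' ++ (dh :: d')).reverse ++ [i] := by
      rw [← List.reverse_reverse w, hrs, List.reverse_cons]
    set sv := (t' ++ (dh :: d')).reverse with hsv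
    have hsolve : ∀ a : FreeMonoid (Fin n),
        a * FreeMonoid.of i = ofl (i :: w) ↔ a = ofl (i :: sv) := by
      intro a
      constructor
      · intro hcon
        have h2 : FreeMonoid.toList a ++ [i] = i :: w := by
          have := congrArg FreeMonoid.toList hcon
          rwa [FreeMonoid.toList_mul, toList_ofl] at this
        rw [hwrev] at h2
        have h3 : i :: (sv ++ [i]) = (i :: sv) ++ [i] := by
          rw [List.cons_append]
        rw [h3] at h2
        have h4 := List.append_inj h2 (by
          have := congrArg List.length h2
          simp at this ⊢
          omega)
        rw [← FreeMonoid.ofList_toList a, h4.1]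
        rfl
      · rintro rfl
        show ofl (i :: sv) * ofl [i] = ofl (i :: w)
        rw [← ofl_append]
        congr 1
        rw [hwrev, List.cons_append]
    have hval : (g * MonoidAlgebra.single (FreeMonoid.of i) (1:ℤ)).coeff (ofl (i :: w))
        = g.coeff (ofl (i :: sv)) := by
      rw [MonoidAlgebra.coeff_mul_single_eq_coeff_mul _ (fun a _ => hsolve a), mul_one]
    have hgnew : g.coeff (ofl (i :: sv)) ≠ 0 := by
      rw [← hval, heq]
      exact hg
    have hw'rev : (i :: sv).reverse = t' ++ ((dh :: d') ++ [i]) := by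
      rw [List.reverse_cons, hsv, List.reverse_reverse, List.append_assoc]
    have hdtake : ((dh :: d') ++ [i]).takeWhile (· == i) = [] := by
      rw [List.cons_append, List.takeWhile_cons, if_neg]
      simp [hdhi]
    have hddrop : ((dh :: d') ++ [i]).dropWhile (· == i) = (dh :: d') ++ [i] := by
      rw [List.cons_append, List.dropWhile_cons, if_neg, ← List.cons_append]
      simp [hdhi]
    have htake' : ((i :: sv).reverse.takeWhile (· == i)).length = k - 1 := by
      rw [hw'rev, (takeWhile_append_all _ t' _ ht'all).1, hdtake, List.append_nil]
      have h5 : (w.reverse.takeWhile (· == i)).length = k := hk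
      rw [hct] at h5
      simp at h5
      omega
    have hdrop' : (i :: sv).reverse.dropWhile (· == i) = (dh :: d') ++ [i] := by
      rw [hw'rev, (takeWhile_append_all _ t' _ ht'all).2, hddrop]
    have hfin := ihk (k - 1) (by omega) (i :: sv) htake' hgnew
    rw [hdrop'] at hfin
    simp at hfin

end CentralizerFreeLie
namespace CentralizerFreeLie

open FreeLieAlgebra

variable {n : ℕ}

attribute [local instance] LieRing.ofAssociativeRing

theorem dropWhile_nil_replicate {w : List (Fin n)} (i : Fin n)
    (h : w.reverse.dropWhile (· == i) = []) : w = List.replicate w.length i := by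
  rw [List.eq_replicate_iff]
  refine ⟨rfl, ?_⟩
  intro b hb
  have hb' : b ∈ w.reverse := List.mem_reverse.mpr hb
  have hrw : w.reverse = w.reverse.takeWhile (· == i) := by
    conv_lhs => rw [← List.takeWhile_append_dropWhile (p := (· == i)) (l := w.reverse)]
    rw [h, List.append_nil]
  rw [hrw] at hb'
  have := List.mem_takeWhile_imp (p := fun x => x == i) hb'
  simpa using this

theorem replicate_not_lyndon (i : Fin n) (k : ℕ) (h2 : 2 ≤ k) :
    ¬ IsLyndon (List.replicate k i) := by
  intro hly
  have hne0 : List.replicate (k - 1) i ≠ [] := by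
    intro hc
    have := congrArg List.length hc
    simp at this
    omega
  have hsfx : List.replicate (k - 1) i <:+ List.replicate k i := by
    refine ⟨[i], ?_⟩
    have : [i] ++ List.replicate (k - 1) i = List.replicate ((k - 1) + 1) i := by
      rw [List.replicate_succ]
      rfl
    rw [this]
    congr 1
    omega
  have hpfx : List.replicate (k - 1) i <+: List.replicate k i := by
    refine ⟨[i], ?_⟩
    have : List.replicate (k - 1) i ++ [i] = List.replicate ((k - 1) + 1) i := by
      rw [List.replicate_succ']
    rw [this]
    congr 1
    omega
  have hne : List.replicate (k - 1) i ≠ List.replicate k i := by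
    intro hc
    have := congrArg List.length hc
    simp at this
    omega
  have hlt : List.replicate k i < List.replicate (k - 1) i := hly.2 _ hne0 hsfx hne
  have hlt' : List.replicate (k - 1) i < List.replicate k i := lt_of_prefix_ne hpfx hne
  exact absurd (lt_trans hlt hlt') (lt_irrefl _)

theorem main_result (i : Fin n) (u : FreeLieAlgebra ℤ (Fin n))
    (h : ⁅u, of ℤ i⁆ = 0) : ∃ m : ℤ, u = m • of ℤ i := by
  classical
  have hmem := mem_S u
  rw [Finsupp.mem_span_image_iff_linearCombination] at hmem
  obtain ⟨c, hsupp, hsum⟩ := hmem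
  have hsupp' : ↑c.support ⊆ {l : List (Fin n) | IsLyndon l} :=
    Finsupp.mem_supported ℤ c |>.mp hsupp
  have hΦcomm : Φ u * MonoidAlgebra.single (FreeMonoid.of i) 1
      = MonoidAlgebra.single (FreeMonoid.of i) 1 * Φ u := by
    have h0 : Φ ⁅u, of ℤ i⁆ = 0 := by
      rw [h, ← LieHom.coe_toLinearMap, map_zero]
    rw [LieHom.map_lie, Φ_of, Ring.lie_def, sub_eq_zero] at h0
    exact h0
  have hΦu : ∀ pt, (Φ u).coeff pt = c.sum (fun l a => a * (Φ (bw l)).coeff pt) := by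
    intro pt
    have hstep : Φ (c.sum fun l a => a • bw l) = c.sum fun l a => a • Φ (bw l) := by
      rw [← LieHom.coe_toLinearMap, map_finsuppSum]
      congr 1
      funext l a
      rw [map_smul]
    rw [← hsum, Finsupp.linearCombination_apply, hstep, MonoidAlgebra.coeff_finsuppSum, Finsupp.sum_apply]
    exact Finsupp.sum_congr (fun l _ => by rw [MonoidAlgebra.coeff_smul, Finsupp.smul_apply, smul_eq_mul])
  have hclaim : ∀ l ∈ c.support, l = [i] := by
    by_contra hcon
    push_neg at hcon
    obtain ⟨l₁, hl₁mem, hl₁ne⟩ := hcon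
    have hBne : (c.support.filter (fun l => l ≠ [i])).Nonempty :=
      ⟨l₁, Finset.mem_filter.mpr ⟨hl₁mem, by simpa using hl₁ne⟩⟩
    set l₀ := (c.support.filter (fun l => l ≠ [i])).min' hBne with hl₀
    have hl₀B := Finset.min'_mem (c.support.filter (fun l => l ≠ [i])) hBne
    rw [Finset.mem_filter] at hl₀B
    obtain ⟨hl₀mem, hl₀ne'⟩ := hl₀B
    have hl₀ne : l₀ ≠ [i] := by simpa using hl₀ne'
    have hl₀ly : IsLyndon l₀ := hsupp' hl₀mem
    have hval : (Φ u).coeff (ofl l₀) = c l₀ := by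
      rw [hΦu]
      rw [Finsupp.sum_eq_single l₀]
      · rw [(tri l₀.length l₀ rfl hl₀ly).1, mul_one]
      · intro b hb hbne
        have hbmemS : b ∈ c.support := Finsupp.mem_support_iff.mpr hb
        have hbly : IsLyndon b := hsupp' hbmemS
        suffices hzz : (Φ (bw b)).coeff (ofl l₀) = 0 by rw [hzz, mul_zero]
        by_contra hzz
        have hbmem : ofl l₀ ∈ (Φ (bw b)).coeff.support := Finsupp.mem_support_iff.mpr hzz
        by_cases hbi : b = [i]
        · subst hbi
          rw [bw_singleton, Φ_of] at hbmem
          rw [MonoidAlgebra.coeff_single, Finsupp.support_single_ne_zero _ one_ne_zero] at hbmem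
          have h5 : ofl l₀ = FreeMonoid.of i := Finset.mem_singleton.mp hbmem
          refine hl₀ne (ofl_injective ?_)
          rw [h5, ofl_singleton]
        · have htri := (tri b.length b rfl hbly).2 _ hbmem
          rw [toList_ofl] at htri
          have hble : b ≤ l₀ := htri.2
          have hl₀b : l₀ ≤ b := by
            refine Finset.min'_le _ b ?_
            rw [Finset.mem_filter]
            exact ⟨hbmemS, by simpa using hbi⟩
          exact hbne (le_antisymm hble hl₀b)
      · intro _
        rw [zero_mul]
    have hcne : c l₀ ≠ 0 := Finsupp.mem_support_iff.mp hl₀mem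
    have hΦne : (Φ u).coeff (ofl l₀) ≠ 0 := by rw [hval]; exact hcne
    have hdrop := centralizer_support (Φ u) i hΦcomm _ l₀ rfl hΦne
    have hrep : l₀ = List.replicate l₀.length i := dropWhile_nil_replicate i hdrop
    have hlen0 : 0 < l₀.length := List.length_pos_iff.mpr hl₀ly.1
    rcases Nat.lt_or_ge l₀.length 2 with hsmall | hbig
    · have h1 : l₀.length = 1 := by omega
      rw [h1] at hrep
      simp only [List.replicate] at hrep
      exact hl₀ne (by simpa using hrep)
    · exact replicate_not_lyndon i l₀.length hbig (hrep ▸ hl₀ly)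
  have hsub : c.support ⊆ {[i]} := by
    intro l hl
    rw [Finset.mem_singleton]
    exact hclaim l hl
  rw [Finsupp.support_subset_singleton] at hsub
  have hfin : Finsupp.linearCombination ℤ bw c = c [i] • bw [i] := by
    conv_lhs => rw [hsub]
    rw [Finsupp.linearCombination_single]
  refine ⟨c [i], ?_⟩
  rw [← hsum, hfin, bw_singleton]

end CentralizerFreeLie

/-- In the free Lie ring on `n ≥ 2` generators, the centralizer of a generator `x_i`
is `ℤ·x_i`. -/
theorem centralizer_of_generator_free_lie {n : ℕ} (hn : 2 ≤ n) (i : Fin n)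
    (u : FreeLieAlgebra ℤ (Fin n)) (h : ⁅u, FreeLieAlgebra.of ℤ i⁆ = 0) :
    ∃ m : ℤ, u = m • FreeLieAlgebra.of ℤ i :=
  CentralizerFreeLie.main_result i u h
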